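/- arXiv:1311.1721 — 11 statements merged into one kernel-verified Lean document; each statement's English description precedes it below -/
import Mathlib

section
/- If a poset X is left Kan-injective in Pos with respect to all order-embeddings (i.e., for every order-embedding h : A → A' and every monotone f : A → X there exists a least monotone g : A' → X with g ∘ h = f), then X is a complete join-semilattice. -/
/-- If a poset `X` is left Kan-injective in `Pos` with respect to all
order-embeddings, then `X` is a complete join-semilattice (every subset has a
least upper bound). -/
theorem stmt1 {X : Type} [PartialOrder X]
    (hinj : ∀ (A A' : Type) [PartialOrder A] [PartialOrder A'] (h : A →o A'),
      (∀ a b : A, h a ≤ h b ↔ a ≤ b) →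
      ∀ f : A →o X, ∃ g : A' →o X, g.comp h = f ∧
        ∀ g' : A' →o X, f ≤ g'.comp h → g ≤ g') :
    ∀ S : Set X, ∃ s : X, IsLUB S s := by
  intro S
  set h : (↥S) →o WithTop (↥S) :=
    ⟨fun a => (a : WithTop ↥S), fun a b hab => WithTop.coe_le_coe.mpr hab⟩ with hh
  set f : (↥S) →o X := ⟨fun a => (a : X), fun a b hab => hab⟩ with hf
  obtain ⟨g, hgh, hleast⟩ := hinj (↥S) (WithTop ↥S) h
    (fun a b => WithTop.coe_le_coe) f
  refine ⟨g ⊤, ?_, ?_⟩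
  · intro x hx
    have := congrFun (congrArg (fun p : (↥S) →o X => (p : ↥S → X)) hgh) ⟨x, hx⟩
    simp only [OrderHom.comp_coe, Function.comp_apply] at this
    calc x = g (h ⟨x, hx⟩) := this.symm
    _ ≤ g ⊤ := g.monotone le_top
  · intro x hx
    have mono : Monotone (fun o : WithTop ↥S => o.elim x (fun a => (a : X))) := by
      intro a b hab
      match a, b with
      | ⊤, ⊤ => exact le_refl x
      | ⊤, (b : ↥S) => exact absurd hab (by simp)
      | (a : ↥S), ⊤ => exact hx a.2
      | (a : ↥S), (b : ↥S) =>
        show (a : X) ≤ (b : X)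
        exact Subtype.coe_le_coe.mpr (WithTop.coe_le_coe.mp hab)
    exact hleast ⟨_, mono⟩ (fun a => le_refl _) ⊤
end

section
/- A monotone map p : X → Y between complete join-semilattices is left Kan-injective with respect to all order-embeddings if and only if p preserves all joins. -/
/-- `g` is the left Kan extension of `f` along `h` in `Pos`, in the strong sense:
`g ∘ h = f` and `g` is least among monotone `g'` with `f ≤ g' ∘ h`. -/
def IsLanPos {A A' X : Type} [PartialOrder A] [PartialOrder A'] [PartialOrder X]
    (h : A →o A') (f : A →o X) (g : A' →o X) : Prop :=
  g.comp h = f ∧ ∀ g' : A' →o X, f ≤ g'.comp h → g ≤ g'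

/-- The canonical left Kan extension given by pointwise suprema. -/
def lanMap {A A' X : Type} [PartialOrder A] [PartialOrder A'] [CompleteLattice X]
    (h : A →o A') (f : A →o X) : A' →o X :=
  ⟨fun a' => sSup (f '' {a | h a ≤ a'}), fun a b hab =>
    sSup_le_sSup (Set.image_mono (fun _ ha => le_trans ha hab))⟩

lemma lan_isLan {A A' X : Type} [PartialOrder A] [PartialOrder A'] [CompleteLattice X]
    (h : A →o A') (hemb : ∀ a b : A, h a ≤ h b ↔ a ≤ b) (f : A →o X) :
    IsLanPos h f (lanMap h f) := by
  constructor
  · ext a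
    apply le_antisymm
    · apply sSup_le
      rintro x ⟨b, hb, rfl⟩
      exact f.mono ((hemb b a).1 hb)
    · exact le_sSup ⟨a, le_rfl, rfl⟩
  · intro g' hg' a'
    apply sSup_le
    rintro x ⟨b, hb, rfl⟩
    exact le_trans (hg' b) (g'.mono hb)

lemma lan_unique {A A' X : Type} [PartialOrder A] [PartialOrder A'] [PartialOrder X]
    {h : A →o A'} {f : A →o X} {g₁ g₂ : A' →o X}
    (h1 : IsLanPos h f g₁) (h2 : IsLanPos h f g₂) : g₁ = g₂ :=
  le_antisymm (h1.2 g₂ (le_of_eq h2.1.symm)) (h2.2 g₁ (le_of_eq h1.1.symm))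

/-- A monotone map `p : X → Y` between complete join-semilattices is
left Kan-injective with respect to all order-embeddings iff `p` preserves all
joins. -/
theorem stmt2 {X Y : Type} [CompleteLattice X] [CompleteLattice Y] (p : X →o Y) :
    (∀ (A A' : Type) [PartialOrder A] [PartialOrder A'] (h : A →o A'),
      (∀ a b : A, h a ≤ h b ↔ a ≤ b) →
      ∀ (f : A →o X) (g : A' →o X) (g' : A' →o Y),
        IsLanPos h f g → IsLanPos h (p.comp f) g' → p.comp g = g') ↔
    (∀ S : Set X, p (sSup S) = sSup (p '' S)) := by
  constructor
  · intro H S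
    set h : ↥S →o X := ⟨fun a => a.1, fun _ _ hab => hab⟩ with hh
    have hemb : ∀ a b : ↥S, h a ≤ h b ↔ a ≤ b := fun a b => Iff.rfl
    have key := H ↥S X h hemb h (lanMap h h) (lanMap h (p.comp h))
      (lan_isLan h hemb h) (lan_isLan h hemb (p.comp h))
    have := congrFun (congrArg (fun (q : X →o Y) => (q : X → Y)) key) (sSup S)
    simp only [OrderHom.comp_coe, Function.comp_apply] at this
    have e1 : (h '' {a : ↥S | h a ≤ sSup S}) = S := by
      ext x
      constructor
      · rintro ⟨a, _, rfl⟩; exact a.2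
      · intro hx; exact ⟨⟨x, hx⟩, le_sSup hx, rfl⟩
    have e2 : ((p.comp h) '' {a : ↥S | h a ≤ sSup S}) = p '' S := by
      rw [show ((p.comp h) : ↥S → Y) = p ∘ h from rfl, Set.image_comp, e1]
    calc p (sSup S) = p (lanMap h h (sSup S)) := by
            rw [show lanMap h h (sSup S) = sSup (h '' {a : ↥S | h a ≤ sSup S}) from rfl, e1]
      _ = lanMap h (p.comp h) (sSup S) := this
      _ = sSup (p '' S) := by
            rw [show lanMap h (p.comp h) (sSup S) = sSup ((p.comp h) '' {a : ↥S | h a ≤ sSup S}) from rfl, e2]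
  · intro H A A' _ _ h hemb f g g' hg hg'
    have hgeq : g = lanMap h f := lan_unique hg (lan_isLan h hemb f)
    have hg'eq : g' = lanMap h (p.comp f) := lan_unique hg' (lan_isLan h hemb (p.comp f))
    subst hgeq hg'eq
    ext a'
    show p (sSup (f '' {a | h a ≤ a'})) = sSup ((p.comp f) '' {a | h a ≤ a'})
    rw [H, show ((p.comp f) : A → Y) = p ∘ f from rfl, Set.image_comp]
end

section
/- Let H be a class of monotone maps in Pos such that some h : A → A' in H satisfies h(p) ≤ h(q) for elements p, q of A with p ≰ q. Then every poset X that is left Kan-injective with respect to h is discrete (x ≤ x' implies x = x'). -/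
/-- If `h : A → A'` is monotone with `h p ≤ h q` for some `p, q`
with `p ≰ q`, then every poset `X` left Kan-injective with respect to `h`
is discrete. -/
theorem stmt3 {A A' X : Type} [PartialOrder A] [PartialOrder A'] [PartialOrder X]
    (h : A →o A') (p q : A) (hpq : h p ≤ h q) (hnle : ¬ p ≤ q)
    (hinj : ∀ f : A →o X, ∃ g : A' →o X, g.comp h = f ∧
      ∀ g' : A' →o X, f ≤ g'.comp h → g ≤ g') :
    ∀ x x' : X, x ≤ x' → x = x' := by
  intro x x' hxx'
  classical
  set f : A →o X := ⟨fun a => if a ≤ q then x else x', by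
    intro a b hab
    by_cases hb : b ≤ q
    · simp [le_trans hab hb, hb]
    · by_cases ha : a ≤ q <;> simp [ha, hb, hxx']⟩ with hf
  obtain ⟨g, hg, -⟩ := hinj f
  have hq : g (h q) = x := by
    have := congrFun (congrArg (fun t : A →o X => (t : A → X)) hg) q
    exact this.trans (if_pos le_rfl)
  have hp : g (h p) = x' := by
    have := congrFun (congrArg (fun t : A →o X => (t : A → X)) hg) p
    exact this.trans (if_neg hnle)
  have : x' ≤ x := by rw [← hp, ← hq]; exact g.monotone hpq
  exact le_antisymm hxx' this
end

section
/- A poset X is left Kan-injective in Pos with respect to the two embeddings ω ↪ ω+1 and ∅ ↪ 1 if and only if X has a least element and joins of all increasing ω-chains. -/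
/-- The embedding `ω ↪ ω + 1` of the chain of natural numbers into its
extension by a top element. -/
def omegaEmb : ℕ →o WithTop ℕ :=
  ⟨fun n => (n : WithTop ℕ), fun _ _ hab => WithTop.coe_le_coe.mpr hab⟩

/-- The embedding `∅ ↪ 1` of the empty poset into the one-element poset. -/
def emptyEmb : Fin 0 →o Fin 1 :=
  ⟨fun e => e.elim0, fun e => e.elim0⟩

/-- Extend a chain `f : ℕ →o X` to `ω+1` by sending `⊤` to an upper bound `u`. -/
def chainExt {X : Type} [PartialOrder X] (f : ℕ →o X) (u : X)
    (hu : ∀ n, f n ≤ u) : WithTop ℕ →o X :=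
  ⟨fun x => WithTop.recTopCoe u f x, by
    intro a b hab
    induction b using WithTop.recTopCoe with
    | top =>
      induction a using WithTop.recTopCoe with
      | top => exact le_rfl
      | coe n => exact hu n
    | coe m =>
      rcases WithTop.le_coe_iff.mp hab with ⟨n, rfl, hnm⟩
      exact f.monotone hnm⟩

/-- A poset `X` is left Kan-injective w.r.t. `ω ↪ ω+1` and `∅ ↪ 1`
iff `X` has a least element and joins of all increasing `ω`-chains. -/
theorem stmt4 {X : Type} [PartialOrder X] :
    ((∀ f : ℕ →o X, ∃ g : WithTop ℕ →o X, IsLanPos omegaEmb f g) ∧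
     (∀ f : Fin 0 →o X, ∃ g : Fin 1 →o X, IsLanPos emptyEmb f g)) ↔
    ((∃ b : X, ∀ x : X, b ≤ x) ∧
     (∀ c : ℕ →o X, ∃ s : X, IsLUB (Set.range c) s)) := by
  constructor
  · rintro ⟨hω, hE⟩
    constructor
    · obtain ⟨g, _, hmin⟩ := hE ⟨fun e => e.elim0, fun e => e.elim0⟩
      refine ⟨g 0, fun x => ?_⟩
      have := hmin ⟨fun _ => x, fun _ _ _ => le_rfl⟩ (fun e => e.elim0)
      exact this 0
    · intro c
      obtain ⟨g, hcomp, hmin⟩ := hω c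
      refine ⟨g ⊤, ?_, ?_⟩
      · rintro _ ⟨n, rfl⟩
        have : c n = g n := by
          rw [← hcomp]; rfl
        rw [this]
        exact g.monotone le_top
      · intro u hu
        have hub : ∀ n, c n ≤ u := fun n => hu ⟨n, rfl⟩
        have := hmin (chainExt c u hub) (by intro n; exact le_rfl)
        exact this ⊤
  · rintro ⟨⟨b, hb⟩, hlub⟩
    constructor
    · intro f
      obtain ⟨s, hs⟩ := hlub f
      refine ⟨chainExt f s (fun n => hs.1 ⟨n, rfl⟩), ?_, ?_⟩
      · ext n; rfl
      · intro g' hg'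
        intro x
        induction x using WithTop.recTopCoe with
        | top =>
          refine hs.2 ?_
          rintro _ ⟨n, rfl⟩
          exact (hg' n).trans (g'.monotone le_top)
        | coe n => exact hg' n
    · intro f
      refine ⟨⟨fun _ => b, fun _ _ _ => le_rfl⟩, ?_, ?_⟩
      · ext e; exact e.elim0
      · intro g' _ x
        exact hb _
end

section
/- A poset X is left Kan-injective in Pos with respect to the embedding h of the 2-element antichain {0,1} into the poset {0,1,⊤} (with 0 ≤ ⊤, 1 ≤ ⊤, 0 and 1 incomparable) if and only if X has binary joins (X is a join-semilattice). -/
/-- The two-element antichain `{0, 1}`. -/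
inductive TwoAntichain : Type
  | zero
  | one

/-- The discrete order on the two-element antichain. -/
instance : PartialOrder TwoAntichain where
  le x y := x = y
  le_refl _ := rfl
  le_trans a b c h₁ h₂ := by
    have e₁ : a = b := h₁
    have e₂ : b = c := h₂
    show a = c
    exact e₁.trans e₂
  le_antisymm _ _ h _ := h

/-- The embedding of the two-element antichain `{0,1}` into `{0,1,⊤}`. -/
def antichainEmb : TwoAntichain →o WithTop TwoAntichain :=
  ⟨fun x => (x : WithTop TwoAntichain), fun x y hxy => by
    have e : x = y := hxy
    subst e
    exact le_refl _⟩

/-- Monotone map from the antichain determined by two values. -/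
def mkF {X : Type} [PartialOrder X] (x y : X) : TwoAntichain →o X :=
  ⟨fun a => match a with | TwoAntichain.zero => x | TwoAntichain.one => y,
   fun a b hab => by
    have e : a = b := hab
    subst e; exact le_refl _⟩

/-- Extend a map on the antichain to `{0,1,⊤}` by sending `⊤` to an upper bound. -/
def extHom {X : Type} [PartialOrder X] (f : TwoAntichain →o X) (u : X)
    (hx : f TwoAntichain.zero ≤ u) (hy : f TwoAntichain.one ≤ u) :
    WithTop TwoAntichain →o X :=
  ⟨fun o => match o with | ⊤ => u | (a : TwoAntichain) => f a,
   fun a b hab => by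
    match b with
    | ⊤ =>
      match a with
      | ⊤ => exact le_refl u
      | (c : TwoAntichain) => cases c; exact hx; exact hy
    | (c : TwoAntichain) =>
      rcases WithTop.le_coe_iff.mp hab with ⟨a', rfl, ha'⟩
      have : a' = c := ha'
      subst this; exact le_refl _⟩

/-- A poset `X` is left Kan-injective in `Pos` w.r.t. the embedding
of the two-element antichain into `{0,1,⊤}` iff `X` has binary joins. -/
theorem stmt5 {X : Type} [PartialOrder X] :
    (∀ f : TwoAntichain →o X, ∃ g : WithTop TwoAntichain →o X, IsLanPos antichainEmb f g) ↔
    (∀ x y : X, ∃ s : X, IsLUB {x, y} s) := by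
  constructor
  · intro H x y
    obtain ⟨g, hg1, hg2⟩ := H (mkF x y)
    refine ⟨g ⊤, ?_, ?_⟩
    · rintro z (rfl | rfl)
      · have : g (TwoAntichain.zero : WithTop TwoAntichain) = z :=
          congrFun (congrArg OrderHom.toFun hg1) TwoAntichain.zero
        calc z = g _ := this.symm
          _ ≤ g ⊤ := g.monotone le_top
      · have : g (TwoAntichain.one : WithTop TwoAntichain) = z :=
          congrFun (congrArg OrderHom.toFun hg1) TwoAntichain.one
        calc z = g _ := this.symm
          _ ≤ g ⊤ := g.monotone le_top
    · intro u hu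
      have hx : x ≤ u := hu (Set.mem_insert x {y})
      have hy : y ≤ u := hu (Set.mem_insert_of_mem x rfl)
      have := hg2 (extHom (mkF x y) u hx hy) (by
        intro a; cases a <;> exact le_refl _)
      exact this ⊤
  · intro H f
    obtain ⟨s, hs⟩ := H (f TwoAntichain.zero) (f TwoAntichain.one)
    have hx : f TwoAntichain.zero ≤ s := hs.1 (Set.mem_insert _ _)
    have hy : f TwoAntichain.one ≤ s := hs.1 (Set.mem_insert_of_mem _ rfl)
    refine ⟨extHom f s hx hy, ?_, ?_⟩
    · ext a; cases a <;> rfl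
    · intro g' hg'
      intro a
      match a with
      | ⊤ =>
        refine hs.2 ?_
        rintro z (rfl | rfl)
        · exact (hg' TwoAntichain.zero).trans (g'.monotone le_top)
        · exact (hg' TwoAntichain.one).trans (g'.monotone le_top)
      | (b : TwoAntichain) => exact hg' b
end

section
/- In Pos, every surjective monotone map e : A → B is a coinserter of some parallel pair: let A₀ be the poset of pairs (x, x') ∈ A × A with e(x) ≤ e(x'), ordered pointwise, with projections d₀, d₁ : A₀ → A. Then e ∘ d₀ ≤ e ∘ d₁ pointwise, and for every monotone d : A → Z with d ∘ d₀ ≤ d ∘ d₁ pointwise there exists a unique monotone d̄ : B → Z with d = d̄ ∘ e. -/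
/-- In `Pos`, every surjective monotone map `e : A → B` is a
coinserter of the pair of projections `d₀, d₁ : A₀ → A`, where
`A₀ = {(x, x') | e x ≤ e x'}` with the pointwise order. -/
theorem stmt9 {A B : Type} [PartialOrder A] [PartialOrder B] (e : A →o B)
    (hsurj : Function.Surjective e)
    (d₀ : {p : A × A // e p.1 ≤ e p.2} →o A)
    (d₁ : {p : A × A // e p.1 ≤ e p.2} →o A)
    (hd₀ : ∀ p, d₀ p = p.1.1) (hd₁ : ∀ p, d₁ p = p.1.2) :
    e.comp d₀ ≤ e.comp d₁ ∧
    (∀ (Z : Type) [PartialOrder Z] (d : A →o Z),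
      d.comp d₀ ≤ d.comp d₁ → ∃! db : B →o Z, d = db.comp e) := by
  constructor
  · intro p
    simp only [OrderHom.comp_coe, Function.comp_apply, hd₀, hd₁]
    exact p.2
  · intro Z _ d hd
    -- key: e x ≤ e x' → d x ≤ d x'
    have key : ∀ x x' : A, e x ≤ e x' → d x ≤ d x' := by
      intro x x' h
      have := hd ⟨(x, x'), h⟩
      simpa [hd₀, hd₁] using this
    have sec := Function.surjInv_eq hsurj
    refine ⟨⟨fun b => d (Function.surjInv hsurj b), ?_⟩, ?_, ?_⟩
    · intro b b' hb
      exact key _ _ (by rw [sec, sec]; exact hb)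
    · ext x
      simp only [OrderHom.comp_coe, Function.comp_apply, OrderHom.coe_mk]
      exact le_antisymm (key _ _ (by rw [sec])) (key _ _ (by rw [sec]))
    · intro db hdb
      ext b
      have : d (Function.surjInv hsurj b) = db (e (Function.surjInv hsurj b)) := by
        rw [hdb]; rfl
      show db b = d (Function.surjInv hsurj b)
      rw [this, sec]
end

section
/- In an order-enriched category, if X is left Kan-injective with respect to h : A → A', if the morphism u : X → Y is left Kan-injective with respect to h, and if i : I → X is an inserter of a parallel pair (u, v) with v : X → Y arbitrary, then the object I is left Kan-injective with respect to h and the morphism i is left Kan-injective with respect to h. -/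
open CategoryTheory

/-- `g` is the (strong) left Kan extension of `f` along `h` in an order-enriched
category: `g ∘ h = f` and `g` is least with `f ≤ g ∘ h`. -/
def IsLanHom {C : Type*} [Category C] [∀ X Y : C, PartialOrder (X ⟶ Y)]
    {A A' X : C} (h : A ⟶ A') (f : A ⟶ X) (g : A' ⟶ X) : Prop :=
  h ≫ g = f ∧ ∀ g' : A' ⟶ X, f ≤ h ≫ g' → g ≤ g'

/-- In an order-enriched category, if `X` is left Kan-injective
w.r.t. `h`, the morphism `u : X → Y` is left Kan-injective w.r.t. `h`, and
`i : I → X` is an inserter of `(u, v)`, then the object `I` and the morphism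
`i` are left Kan-injective w.r.t. `h`. -/
theorem stmt11 {C : Type*} [Category C] [∀ X Y : C, PartialOrder (X ⟶ Y)]
    (hcomp : ∀ {X Y Z : C} (f₁ f₂ : X ⟶ Y) (g₁ g₂ : Y ⟶ Z),
      f₁ ≤ f₂ → g₁ ≤ g₂ → f₁ ≫ g₁ ≤ f₂ ≫ g₂)
    {A A' X Y I : C} (h : A ⟶ A') (u v : X ⟶ Y) (i : I ⟶ X)
    -- `i` is an inserter of `(u, v)`:
    (hins : i ≫ u ≤ i ≫ v)
    (huniv : ∀ {J : C} (j : J ⟶ X), j ≫ u ≤ j ≫ v → ∃! k : J ⟶ I, k ≫ i = j)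
    (hmono : ∀ {J : C} (f g : J ⟶ I), f ≫ i ≤ g ≫ i → f ≤ g)
    -- `X` and `Y` are left Kan-injective w.r.t. `h`:
    (hX : ∀ f : A ⟶ X, ∃ g : A' ⟶ X, IsLanHom h f g)
    (hY : ∀ f : A ⟶ Y, ∃ g : A' ⟶ Y, IsLanHom h f g)
    -- `u` is left Kan-injective w.r.t. `h`:
    (hu : ∀ (f : A ⟶ X) (g : A' ⟶ X) (g' : A' ⟶ Y),
      IsLanHom h f g → IsLanHom h (f ≫ u) g' → g ≫ u = g') :
    -- the object `I` is left Kan-injective w.r.t. `h`: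
    (∀ f : A ⟶ I, ∃ g : A' ⟶ I, IsLanHom h f g) ∧
    -- the morphism `i` is left Kan-injective w.r.t. `h`:
    (∀ (f : A ⟶ I) (g : A' ⟶ I) (g' : A' ⟶ X),
      IsLanHom h f g → IsLanHom h (f ≫ i) g' → g ≫ i = g') := by
  have key : ∀ (f : A ⟶ I) (g' : A' ⟶ X), IsLanHom h (f ≫ i) g' →
      ∃ k : A' ⟶ I, k ≫ i = g' ∧ IsLanHom h f k := by
    intro f g' hg'
    obtain ⟨w, hw⟩ := hY ((f ≫ i) ≫ u)
    have huw : g' ≫ u = w := hu (f ≫ i) g' w hg' hw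
    have hfiuv : (f ≫ i) ≫ u ≤ (f ≫ i) ≫ v := by
      simpa [Category.assoc] using hcomp f f (i ≫ u) (i ≫ v) le_rfl hins
    have hle : g' ≫ u ≤ g' ≫ v := by
      rw [huw]
      apply hw.2
      have : h ≫ g' ≫ v = (f ≫ i) ≫ v := by
        rw [← Category.assoc, hg'.1]
      rw [this]
      exact hfiuv
    obtain ⟨k, hk, _⟩ := huniv g' hle
    obtain ⟨k0, _, hk0uniq⟩ := huniv (f ≫ i) hfiuv
    have hhk : h ≫ k = f := by
      have e1 : h ≫ k = k0 := hk0uniq _ (by show (h ≫ k) ≫ i = f ≫ i; rw [Category.assoc, hk, hg'.1])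
      have e2 : f = k0 := hk0uniq _ rfl
      rw [e1, e2]
    refine ⟨k, hk, hhk, ?_⟩
    intro k' hfk'
    have : g' ≤ k' ≫ i := by
      apply hg'.2
      have := hcomp f (h ≫ k') i i hfk' le_rfl
      simpa [Category.assoc] using this
    exact hmono k k' (by rw [hk]; exact this)
  constructor
  · intro f
    obtain ⟨g', hg'⟩ := hX (f ≫ i)
    obtain ⟨k, _, hlan⟩ := key f g' hg'
    exact ⟨k, hlan⟩
  · intro f g g' hg hg'
    obtain ⟨k, hk, hlan⟩ := key f g' hg'
    have : k = g :=
      le_antisymm (hlan.2 g (by rw [hg.1])) (hg.2 k (by rw [hlan.1]))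
    rw [← this, hk]
end

section
/- In an order-enriched category with an inserter-ideal reflective subcategory C (with reflector F and units η_X : X → FX), for any parallel pair f, g : FX → A with f a morphism of C: if f ∘ η_X ≤ g ∘ η_X then f ≤ g. -/
open CategoryTheory

/-- `i : I ⟶ X` is an inserter of the parallel pair `(u, v)` in an
order-enriched category. -/
def IsInserter {C : Type*} [Category C] [∀ X Y : C, PartialOrder (X ⟶ Y)]
    {I X Y : C} (u v : X ⟶ Y) (i : I ⟶ X) : Prop :=
  i ≫ u ≤ i ≫ v ∧
  (∀ {J : C} (j : J ⟶ X), j ≫ u ≤ j ≫ v → ∃! k : J ⟶ I, k ≫ i = j) ∧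
  (∀ {J : C} (f g : J ⟶ I), f ≫ i ≤ g ≫ i → f ≤ g)

/-- In an order-enriched category with inserters, for an
inserter-ideal reflective subcategory `(objP, homP)` with reflector `F` and
units `η_X : X ⟶ F X`, every parallel pair `f, g : F X ⟶ A` with `f` in the
subcategory satisfies: `f ∘ η_X ≤ g ∘ η_X` implies `f ≤ g`. -/
theorem stmt12 {C : Type*} [Category C] [∀ X Y : C, PartialOrder (X ⟶ Y)]
    (hcomp : ∀ {X Y Z : C} (f₁ f₂ : X ⟶ Y) (g₁ g₂ : Y ⟶ Z),
      f₁ ≤ f₂ → g₁ ≤ g₂ → f₁ ≫ g₁ ≤ f₂ ≫ g₂)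
    -- the subcategory:
    (objP : C → Prop) (homP : ∀ {X Y : C}, (X ⟶ Y) → Prop)
    (hdom : ∀ {X Y : C} (f : X ⟶ Y), homP f → objP X ∧ objP Y)
    (hid : ∀ {X : C}, objP X → homP (𝟙 X))
    (hcompP : ∀ {X Y Z : C} (f : X ⟶ Y) (g : Y ⟶ Z), homP f → homP g → homP (f ≫ g))
    -- inserters exist:
    (hinsEx : ∀ {X Y : C} (u v : X ⟶ Y), ∃ (I : C) (i : I ⟶ X), IsInserter u v i)
    -- the subcategory is inserter-ideal:
    (hideal : ∀ {I X Y : C} (u v : X ⟶ Y) (i : I ⟶ X),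
      homP u → IsInserter u v i → homP i)
    -- the subcategory is reflective, with reflector `F` and units `η`:
    (F : C → C) (η : ∀ X : C, X ⟶ F X) (hFobj : ∀ X : C, objP (F X))
    (hrefl : ∀ {X Y : C}, objP Y → ∀ f : X ⟶ Y,
      ∃! f' : F X ⟶ Y, homP f' ∧ η X ≫ f' = f) :
    ∀ {X A : C} (f g : F X ⟶ A), homP f → η X ≫ f ≤ η X ≫ g → f ≤ g := by
  intro X A f g hf hle
  obtain ⟨I, i, hins⟩ := hinsEx f g
  have hiP : homP i := hideal f g i hf hins
  have hIobj : objP I := (hdom i hiP).1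
  obtain ⟨k, hki, _⟩ := hins.2.1 (η X) hle
  obtain ⟨k', ⟨hk'P, hk'η⟩, _⟩ := hrefl hIobj k
  -- show k' ≫ i = 𝟙 (F X) by uniqueness of factorization of η X
  obtain ⟨m, _, hmuniq⟩ := hrefl (hFobj X) (η X)
  have h1 : k' ≫ i = m := hmuniq _ ⟨hcompP k' i hk'P hiP, by
    rw [← Category.assoc, hk'η, hki]⟩
  have h2 : 𝟙 (F X) = m := hmuniq _ ⟨hid (hFobj X), Category.comp_id _⟩
  have hsplit : k' ≫ i = 𝟙 (F X) := h1.trans h2.symm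
  have := hcomp k' k' (i ≫ f) (i ≫ g) le_rfl hins.1
  simpa [← Category.assoc, hsplit] using this
end

section
/- Let T = (T, η, μ) be a Kock-Zöberlein monad on an order-enriched category and α : TX → X a T-algebra. Then X is left Kan-injective with respect to each unit η_A: for every f : A → X, the morphism α ∘ Tf : TA → X satisfies (α ∘ Tf) ∘ η_A = f and is the least g : TA → X with f ≤ g ∘ η_A. -/
open CategoryTheory

/-- For a Kock-Zöberlein monad `T` on an order-enriched category
and a `T`-algebra `α : T X ⟶ X`, the object `X` is left Kan-injective w.r.t.
each unit `η_A`: for every `f : A ⟶ X`, the morphism `T f ≫ α` satisfies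
`η_A ≫ (T f ≫ α) = f` and is the least `g` with `f ≤ η_A ≫ g`. -/
theorem stmt14 {C : Type*} [Category C] [∀ X Y : C, PartialOrder (X ⟶ Y)]
    (hcomp : ∀ {X Y Z : C} (f₁ f₂ : X ⟶ Y) (g₁ g₂ : Y ⟶ Z),
      f₁ ≤ f₂ → g₁ ≤ g₂ → f₁ ≫ g₁ ≤ f₂ ≫ g₂)
    (T : Monad C)
    (hT : ∀ {X Y : C} (f g : X ⟶ Y), f ≤ g → T.map f ≤ T.map g)
    (hKZ : ∀ X : C, T.map (T.η.app X) ≤ T.η.app (T.obj X))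
    {X : C} (α : T.obj X ⟶ X)
    (hα₁ : T.η.app X ≫ α = 𝟙 X) (hα₂ : T.μ.app X ≫ α = T.map α ≫ α) :
    ∀ {A : C} (f : A ⟶ X),
      T.η.app A ≫ (T.map f ≫ α) = f ∧
      ∀ g : T.obj A ⟶ X, f ≤ T.η.app A ≫ g → T.map f ≫ α ≤ g := by
  intro A f
  constructor
  · rw [← Category.assoc, ← T.η.naturality f, Functor.id_map, Category.assoc, hα₁]; simp
  · intro g hg
    calc T.map f ≫ α ≤ T.map (T.η.app A ≫ g) ≫ α :=
          hcomp _ _ _ _ (hT _ _ hg) le_rfl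
      _ = T.map (T.η.app A) ≫ T.map g ≫ α := by
          rw [Functor.map_comp, Category.assoc]
      _ ≤ T.η.app (T.obj A) ≫ T.map g ≫ α := hcomp _ _ _ _ (hKZ A) le_rfl
      _ = g ≫ T.η.app X ≫ α := by
          rw [← Category.assoc, ← T.η.naturality g, Functor.id_map, Category.assoc]
      _ = g := by rw [hα₁]; simp
end

section
/- Let C be a subcategory of an order-enriched category closed under coprojections, in the sense that: (a) if r : C₀ → X is a coprojection (there is s : X → C₀ with r ∘ s = id and id ≤ s ∘ r) and C₀ ∈ C, then X ∈ C. Show that every Kan-injectivity subcategory LInj(H) satisfies (a): if r : C₀ → X is a coprojection and C₀ is left Kan-injective w.r.t. every h ∈ H, then so is X; moreover Lan_h f = r ∘ Lan_h (s ∘ f) for f : A → X and h : A → A' in H. -/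
open CategoryTheory

/-- Kan-injectivity subcategories are closed under coprojections:
if `r : C₀ ⟶ X` is a coprojection (with `s : X ⟶ C₀`, `r ∘ s = id_X` and
`id_{C₀} ≤ s ∘ r`) and `C₀` is left Kan-injective w.r.t. `h`, then so is `X`;
moreover `Lan_h f = r ∘ Lan_h (s ∘ f)` for every `f : A ⟶ X`. -/
theorem stmt16 {C : Type*} [Category C] [∀ X Y : C, PartialOrder (X ⟶ Y)]
    (hcomp : ∀ {X Y Z : C} (f₁ f₂ : X ⟶ Y) (g₁ g₂ : Y ⟶ Z),
      f₁ ≤ f₂ → g₁ ≤ g₂ → f₁ ≫ g₁ ≤ f₂ ≫ g₂)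
    {A A' C₀ X : C} (h : A ⟶ A')
    (r : C₀ ⟶ X) (s : X ⟶ C₀)
    (hrs : s ≫ r = 𝟙 X) (hsr : 𝟙 C₀ ≤ r ≫ s)
    -- `C₀` is left Kan-injective w.r.t. `h`:
    (hC₀ : ∀ f : A ⟶ C₀, ∃ g : A' ⟶ C₀, IsLanHom h f g) :
    -- `X` is left Kan-injective w.r.t. `h`:
    (∀ f : A ⟶ X, ∃ g : A' ⟶ X, IsLanHom h f g) ∧
    -- the formula `Lan_h f = r ∘ Lan_h (s ∘ f)`:
    (∀ (f : A ⟶ X) (g₀ : A' ⟶ C₀), IsLanHom h (f ≫ s) g₀ → IsLanHom h f (g₀ ≫ r)) := by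
  have key : ∀ (f : A ⟶ X) (g₀ : A' ⟶ C₀), IsLanHom h (f ≫ s) g₀ → IsLanHom h f (g₀ ≫ r) := by
    intro f g₀ ⟨hg₀, hmin⟩
    constructor
    · rw [← Category.assoc, hg₀, Category.assoc, hrs, Category.comp_id]
    · intro g' hle
      have h1 : f ≫ s ≤ h ≫ (g' ≫ s) := by
        calc f ≫ s ≤ (h ≫ g') ≫ s := hcomp _ _ _ _ hle le_rfl
        _ = h ≫ (g' ≫ s) := Category.assoc _ _ _
      have h2 := hmin (g' ≫ s) h1
      calc g₀ ≫ r ≤ (g' ≫ s) ≫ r := hcomp _ _ _ _ h2 le_rfl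
      _ = g' := by rw [Category.assoc, hrs, Category.comp_id]
  refine ⟨fun f => ?_, key⟩
  obtain ⟨g₀, hg₀⟩ := hC₀ (f ≫ s)
  exact ⟨g₀ ≫ r, key f g₀ hg₀⟩
end

section
/- In an order-enriched category where morphisms of a class E are epimorphisms and morphisms of a class M are strong monomorphisms, with (E, M)-factorizations: if m ∘ u ≤ m ∘ v for a strong monomorphism m, where the coinserter c of (u, v) exists, then u ≤ v. (In particular, in a cocomplete cowellpowered order-enriched category the (epi, strong mono) factorization system is proper: strong monomorphisms are order-monomorphisms.) -/
open CategoryTheory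

/-- In an order-enriched category, if `m ∘ u ≤ m ∘ v` for a
strong monomorphism `m`, and the coinserter of `(u, v)` exists, then `u ≤ v`.
In particular strong monomorphisms are order-monomorphisms. -/
theorem stmt18 {C : Type*} [Category C] [∀ X Y : C, PartialOrder (X ⟶ Y)]
    (hcomp : ∀ {X Y Z : C} (f₁ f₂ : X ⟶ Y) (g₁ g₂ : Y ⟶ Z),
      f₁ ≤ f₂ → g₁ ≤ g₂ → f₁ ≫ g₁ ≤ f₂ ≫ g₂)
    {X A B Q : C} (u v : X ⟶ A) (m : A ⟶ B) (hm : StrongMono m)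
    -- the coinserter `c : A ⟶ Q` of `(u, v)`:
    (c : A ⟶ Q) (hc : u ≫ c ≤ v ≫ c)
    (hcouniv : ∀ {Z : C} (d : A ⟶ Z), u ≫ d ≤ v ≫ d → ∃! d' : Q ⟶ Z, c ≫ d' = d)
    (hcepi : ∀ {Z : C} (p q : Q ⟶ Z), c ≫ p ≤ c ≫ q → p ≤ q)
    (hle : u ≫ m ≤ v ≫ m) :
    u ≤ v := by
  obtain ⟨d', hd', -⟩ := hcouniv m hle
  haveI : Epi c := ⟨fun p q h => le_antisymm (hcepi p q h.le) (hcepi q p h.ge)⟩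
  have sq : CommSq (𝟙 A) c m d' := ⟨by simp [hd']⟩
  haveI : HasLiftingProperty c m := StrongMono.rlp c
  have h1 : c ≫ sq.lift = 𝟙 A := sq.fac_left
  calc u = u ≫ c ≫ sq.lift := by rw [h1, Category.comp_id]
    _ ≤ v ≫ c ≫ sq.lift := by
        rw [← Category.assoc, ← Category.assoc]
        exact hcomp _ _ _ _ hc le_rfl
    _ = v := by rw [h1, Category.comp_id]
end
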